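/- If in an instance with n agents and additive valuations every single good is small relative to every agent's maximin share, i.e. v_i(g) ≤ μ_i^n(M)/2 for every agent i and every good g ∈ M, then there exists an allocation A with v_i(A_i) ≥ μ_i^n(M)/2 for every agent i. -/

import Mathlib

open Finset

/-- The maximin share `μ^k(S)` of an agent with additive valuation `v`: the maximum over
all partitions of `S` into `k` pairwise disjoint bundles of the minimum bundle value. -/
noncomputable def maximinShare {G : Type*} [DecidableEq G] (v : G → ℝ) (k : ℕ)
    (S : Finset G) : ℝ :=
  sSup {x : ℝ | ∃ B : Fin k → Finset G,
    (∀ i j, i ≠ j → Disjoint (B i) (B j)) ∧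
    Finset.univ.biUnion B = S ∧
    x = ⨅ j : Fin k, ∑ g ∈ B j, v g}

section Aux

variable {G : Type*} [DecidableEq G]

def mmsSet (v : G → ℝ) (k : ℕ) (M : Finset G) : Set ℝ :=
  {x : ℝ | ∃ B : Fin k → Finset G,
    (∀ i j, i ≠ j → Disjoint (B i) (B j)) ∧
    Finset.univ.biUnion B = M ∧
    x = ⨅ j : Fin k, ∑ g ∈ B j, v g}

lemma maximinShare_eq (v : G → ℝ) (k : ℕ) (M : Finset G) :
    maximinShare v k M = sSup (mmsSet v k M) := rfl

lemma mmsSet_nonempty {k : ℕ} (hk : 0 < k) (v : G → ℝ) (M : Finset G) :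
    (mmsSet v k M).Nonempty := by
  refine ⟨_, fun j => if j = ⟨0, hk⟩ then M else ∅, ?_, ?_, rfl⟩
  · intro i j hij
    by_cases hi : i = ⟨0, hk⟩
    · have hj : j ≠ ⟨0, hk⟩ := fun h => hij (hi.trans h.symm)
      simp [hi, hj]
    · simp [hi]
  · ext g
    simp only [mem_biUnion, mem_univ, true_and]
    constructor
    · rintro ⟨j, hj⟩
      by_cases h : j = ⟨0, hk⟩ <;> simp [h] at hj
      exact hj
    · intro hg
      exact ⟨⟨0, hk⟩, by simp [hg]⟩

lemma mmsSet_mem_nonneg {k : ℕ} (v : G → ℝ) (hv : ∀ g, 0 ≤ v g) (M : Finset G)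
    {x : ℝ} (hx : x ∈ mmsSet v k M) : 0 ≤ x := by
  obtain ⟨B, -, -, rfl⟩ := hx
  exact Real.iInf_nonneg fun j => Finset.sum_nonneg fun g _ => hv g

lemma mmsSet_mem_mul_le {k : ℕ} (hk : 0 < k) (v : G → ℝ) (M : Finset G)
    {x : ℝ} (hx : x ∈ mmsSet v k M) : (k : ℝ) * x ≤ ∑ g ∈ M, v g := by
  obtain ⟨B, hdisj, hcov, rfl⟩ := hx
  have hbdd : BddBelow (Set.range fun j : Fin k => ∑ g ∈ B j, v g) :=
    (Set.finite_range _).bddBelow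
  have hsum : ∑ g ∈ M, v g = ∑ j : Fin k, ∑ g ∈ B j, v g := by
    rw [← hcov, Finset.sum_biUnion]
    intro a _ b _ hab
    exact hdisj a b hab
  calc (k : ℝ) * ⨅ j : Fin k, ∑ g ∈ B j, v g
      = ∑ _j : Fin k, ⨅ j : Fin k, ∑ g ∈ B j, v g := by
        simp [Finset.sum_const, nsmul_eq_mul]
    _ ≤ ∑ j : Fin k, ∑ g ∈ B j, v g := Finset.sum_le_sum fun j _ => ciInf_le hbdd j
    _ = ∑ g ∈ M, v g := hsum.symm

lemma mmsSet_bddAbove {k : ℕ} (hk : 0 < k) (v : G → ℝ) (M : Finset G) :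
    BddAbove (mmsSet v k M) := by
  refine ⟨(∑ g ∈ M, v g) / k, fun x hx => ?_⟩
  have := mmsSet_mem_mul_le hk v M hx
  rw [le_div_iff₀ (by exact_mod_cast hk)]
  linarith [this]

lemma mms_nonneg {k : ℕ} (hk : 0 < k) (v : G → ℝ) (hv : ∀ g, 0 ≤ v g) (M : Finset G) :
    0 ≤ maximinShare v k M := by
  obtain ⟨x, hx⟩ := mmsSet_nonempty hk v M
  exact le_trans (mmsSet_mem_nonneg v hv M hx) (le_csSup (mmsSet_bddAbove hk v M) hx)

lemma mms_mul_le_total {k : ℕ} (hk : 0 < k) (v : G → ℝ) (M : Finset G) :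
    (k : ℝ) * maximinShare v k M ≤ ∑ g ∈ M, v g := by
  have hkpos : (0 : ℝ) < k := by exact_mod_cast hk
  rw [maximinShare_eq, mul_comm, ← le_div_iff₀ hkpos]
  refine csSup_le (mmsSet_nonempty hk v M) fun x hx => ?_
  rw [le_div_iff₀ hkpos, mul_comm]
  exact mmsSet_mem_mul_le hk v M hx

lemma bagfill {n : ℕ} (hn : 0 < n) (M : Finset G) (v : Fin n → G → ℝ)
    (hv : ∀ i g, 0 ≤ v i g)
    (hsmall : ∀ i : Fin n, ∀ g ∈ M, v i g ≤ maximinShare (v i) n M / 2) :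
    ∀ (m : ℕ) (T : Finset (Fin n)), T.card = m + 1 → ∀ (S : Finset G), S ⊆ M →
      (∀ j ∈ T, (T.card : ℝ) * maximinShare (v j) n M ≤ ∑ g ∈ S, v j g) →
      ∃ A : Fin n → Finset G,
        (∀ i, i ∉ T → A i = ∅) ∧
        (∀ i j, i ≠ j → Disjoint (A i) (A j)) ∧
        Finset.univ.biUnion A = S ∧
        ∀ i ∈ T, maximinShare (v i) n M / 2 ≤ ∑ g ∈ A i, v i g := by
  intro m
  induction m with
  | zero =>
    intro T hT S hS hinv
    obtain ⟨j, rfl⟩ := Finset.card_eq_one.mp hT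
    refine ⟨fun i => if i = j then S else ∅, ?_, ?_, ?_, ?_⟩
    · intro i hi
      simp only [mem_singleton] at hi
      simp [hi]
    · intro i i' hii'
      by_cases hij : i = j
      · have : i' ≠ j := fun h => hii' (hij.trans h.symm)
        simp [hij, this]
      · simp [hij]
    · ext g
      simp only [mem_biUnion, mem_univ, true_and]
      constructor
      · rintro ⟨i, hi⟩
        by_cases h : i = j <;> simp [h] at hi
        exact hi
      · intro hg
        exact ⟨j, by simp [hg]⟩
    · intro i hi
      simp only [mem_singleton] at hi
      subst hi
      have h1 := hinv i (mem_singleton_self i)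
      have h0 := mms_nonneg hn (v i) (hv i) M
      simp only [card_singleton, Nat.cast_one, one_mul] at h1
      show maximinShare (v i) n M / 2 ≤ ∑ g ∈ (if i = i then S else ∅), v i g
      rw [if_pos rfl]
      linarith
  | succ m ih =>
    intro T hT S hS hinv
    classical
    have hTne : T.Nonempty := Finset.card_pos.mp (by omega)
    set L := S.toList with hLdef
    have hL : L.toFinset = S := Finset.toList_toFinset S
    set P : ℕ → Finset G := fun k => (L.take k).toFinset with hPdef
    have hPsubS : ∀ k, P k ⊆ S := by
      intro k g hg
      rw [hPdef] at hg
      simp only [List.mem_toFinset] at hg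
      rw [← hL, List.mem_toFinset]
      exact List.take_subset _ _ hg
    set p : ℕ → Prop :=
      fun k => ∃ j ∈ T, maximinShare (v j) n M / 2 ≤ ∑ g ∈ P k, v j g with hpdef
    have hplen : p L.length := by
      obtain ⟨j, hj⟩ := hTne
      refine ⟨j, hj, ?_⟩
      have hPL : P L.length = S := by
        rw [hPdef]; simp [List.take_length, hL]
      rw [hPL]
      have h1 := hinv j hj
      have h0 := mms_nonneg hn (v j) (hv j) M
      have hc : (1 : ℝ) ≤ (T.card : ℝ) := by
        rw [hT]; push_cast; linarith
      nlinarith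
    have hex : ∃ k, p k := ⟨L.length, hplen⟩
    set k := Nat.find hex with hkdef
    have hk : p k := Nat.find_spec hex
    have hkle : k ≤ L.length := Nat.find_le hplen
    -- key bound: the bag is worth at most μ to every agent in T
    have hbound : ∀ j' ∈ T, ∑ g ∈ P k, v j' g ≤ maximinShare (v j') n M := by
      intro j' hj'
      match hk2 : k with
      | 0 =>
        have : P 0 = ∅ := by simp [hPdef]
        rw [this]
        simpa using mms_nonneg hn (v j') (hv j') M
      | k' + 1 =>
        have hk'len : k' < L.length := by omega
        have hnotp : ¬ p k' := Nat.find_min hex (by omega : k' < k)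
        have hless : ∑ g ∈ P k', v j' g < maximinShare (v j') n M / 2 := by
          simp only [hpdef] at hnotp
          push_neg at hnotp
          exact hnotp j' hj'
        have hgmem : L.get ⟨k', hk'len⟩ ∈ M := by
          apply hS
          rw [← hL, List.mem_toFinset]
          exact List.get_mem _ _
        have hgval : v j' (L.get ⟨k', hk'len⟩) ≤ maximinShare (v j') n M / 2 :=
          hsmall j' _ hgmem
        have htake : P (k' + 1) = P k' ∪ {L.get ⟨k', hk'len⟩} := by
          rw [hPdef]
          simp only []
          rw [List.take_succ]
          rw [List.toFinset_append]
          congr 1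
          rw [List.getElem?_eq_getElem hk'len]
          rfl
        have hsum_le : ∑ g ∈ P (k' + 1), v j' g
            ≤ ∑ g ∈ P k', v j' g + v j' (L.get ⟨k', hk'len⟩) := by
          rw [htake]
          have h2 := Finset.sum_union_inter
            (s₁ := P k') (s₂ := {L.get ⟨k', hk'len⟩}) (f := v j')
          have h3 : 0 ≤ ∑ g ∈ P k' ∩ {L.get ⟨k', hk'len⟩}, v j' g :=
            Finset.sum_nonneg fun g _ => hv j' g
          simp only [Finset.sum_singleton] at h2
          linarith
        linarith
    obtain ⟨j, hjT, hjval⟩ := hk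
    set T' := T.erase j with hT'def
    set S' := S \ P k with hS'def
    have hT' : T'.card = m + 1 := by
      rw [hT'def, card_erase_of_mem hjT, hT]
      omega
    have hS'M : S' ⊆ M := (sdiff_subset).trans hS
    have hinv' : ∀ j' ∈ T',
        (T'.card : ℝ) * maximinShare (v j') n M ≤ ∑ g ∈ S', v j' g := by
      intro j' hj'
      have hj'T : j' ∈ T := mem_of_mem_erase hj'
      have hsplit : ∑ g ∈ S', v j' g + ∑ g ∈ P k, v j' g = ∑ g ∈ S, v j' g :=
        Finset.sum_sdiff (hPsubS k)
      have h1 := hinv j' hj'T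
      have h2 := hbound j' hj'T
      rw [hT] at h1
      rw [hT']
      push_cast at h1 ⊢
      linarith
    obtain ⟨A', hA'off, hA'disj, hA'cov, hA'val⟩ := ih T' hT' S' hS'M hinv'
    have hA'sub : ∀ i, A' i ⊆ S' := by
      intro i
      rw [← hA'cov]
      exact Finset.subset_biUnion_of_mem A' (mem_univ i)
    refine ⟨fun i => if i = j then P k else A' i, ?_, ?_, ?_, ?_⟩
    · intro i hi
      have hij : i ≠ j := fun h => hi (h ▸ hjT)
      simp only [if_neg hij]
      exact hA'off i (fun h => hi (mem_of_mem_erase h))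
    · intro i i' hii'
      by_cases h1 : i = j <;> by_cases h2 : i' = j
      · exact absurd (h1.trans h2.symm) hii'
      · simp only [if_pos h1, if_neg h2]
        exact (Finset.disjoint_of_subset_left (hA'sub i') Finset.sdiff_disjoint).symm
      · simp only [if_neg h1, if_pos h2]
        exact Finset.disjoint_of_subset_left (hA'sub i) Finset.sdiff_disjoint
      · simp only [if_neg h1, if_neg h2]
        exact hA'disj i i' hii'
    · ext g
      simp only [mem_biUnion, mem_univ, true_and]
      constructor
      · rintro ⟨i, hi⟩
        by_cases h : i = j
        · rw [if_pos h] at hi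
          exact hPsubS k hi
        · rw [if_neg h] at hi
          exact (Finset.sdiff_subset) (hA'sub i hi)
      · intro hg
        by_cases hgP : g ∈ P k
        · exact ⟨j, by simp [hgP]⟩
        · have hgS' : g ∈ S' := Finset.mem_sdiff.mpr ⟨hg, hgP⟩
          rw [← hA'cov] at hgS'
          obtain ⟨i, -, hi⟩ := mem_biUnion.mp hgS'
          have hij : i ≠ j := by
            intro h
            subst h
            rw [hA'off i (Finset.notMem_erase i T)] at hi
            exact absurd hi (Finset.notMem_empty g)
          exact ⟨i, by simp [hij, hi]⟩
    · intro i hiT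
      by_cases h : i = j
      · subst h
        simpa using hjval
      · simp only [if_neg h]
        exact hA'val i (Finset.mem_erase.mpr ⟨h, hiT⟩)

end Aux

/-- If every single good is worth at most half of every agent's maximin share,
then there is an allocation giving each agent at least half of her maximin share. -/
theorem half_mms_of_small_goods {n : ℕ} (hn : 0 < n) {G : Type*} [DecidableEq G]
    (M : Finset G) (v : Fin n → G → ℝ) (hv : ∀ i g, 0 ≤ v i g)
    (hsmall : ∀ i : Fin n, ∀ g ∈ M, v i g ≤ maximinShare (v i) n M / 2) :
    ∃ A : Fin n → Finset G,
      (∀ i j, i ≠ j → Disjoint (A i) (A j)) ∧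
      Finset.univ.biUnion A = M ∧
      ∀ i : Fin n, maximinShare (v i) n M / 2 ≤ ∑ g ∈ A i, v i g := by
  have hcard : (Finset.univ : Finset (Fin n)).card = (n - 1) + 1 := by
    simp [Finset.card_univ]
    omega
  have hinv : ∀ j ∈ (Finset.univ : Finset (Fin n)),
      ((Finset.univ : Finset (Fin n)).card : ℝ) * maximinShare (v j) n M
        ≤ ∑ g ∈ M, v j g := by
    intro j _
    have := mms_mul_le_total hn (v j) M
    simpa [Finset.card_univ] using this
  obtain ⟨A, _, hdisj, hcov, hval⟩ :=
    bagfill hn M v hv hsmall (n - 1) Finset.univ hcard M (subset_refl M) hinv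
  exact ⟨A, hdisj, hcov, fun i => hval i (Finset.mem_univ i)⟩
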